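/- Assume h > 0 > ℓ, α > 0, σ > 0, and ℓ^† < kα < h^†. Then Q₁ and Q₂ are continuous on [1,∞), Q₁(β) > 0 for all β ≥ 1, and there exists β ∈ (1,∞) such that Q₁(β) = Q₂(β). -/
import Mathlib
set_option maxHeartbeats 1000000

open Real

theorem stmt_8 (h ℓ σ α γ hd ld k : ℝ) (hh : 0 < h) (hℓ : ℓ < 0) (hσ : 0 < σ) (hα : 0 < α)
    (hγ : γ = Real.sqrt (1 + 8 * α * σ ^ 2 / (h - ℓ) ^ 2))
    (hld : ld < k * α) (hhd : k * α < hd)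
    (Q₁ Q₂ : ℝ → ℝ)
    (hQ₁ : ∀ β : ℝ, Q₁ β = ((γ - 1) / (γ + 1)) *
      ((-ℓ - (ld - k * α) * β ^ (-((γ + 1) / 2))) / (h + (hd - k * α) * β ^ ((1 - γ) / 2))))
    (hQ₂ : ∀ β : ℝ, Q₂ β = ((γ + 1) / (γ - 1)) *
      ((-ℓ - (ld - k * α) * β ^ ((γ - 1) / 2)) / (h + (hd - k * α) * β ^ ((γ + 1) / 2)))) :
    ContinuousOn Q₁ (Set.Ici 1) ∧ ContinuousOn Q₂ (Set.Ici 1) ∧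
    (∀ β : ℝ, 1 ≤ β → 0 < Q₁ β) ∧
    ∃ β ∈ Set.Ioi (1 : ℝ), Q₁ β = Q₂ β := by
  have ha : 0 < k * α - ld := by linarith
  have hb : 0 < hd - k * α := by linarith
  have hγ1 : 1 < γ := by
    rw [hγ]
    have h1 : (0:ℝ) < 8 * α * σ ^ 2 / (h - ℓ) ^ 2 :=
      div_pos (by positivity) (pow_pos (by linarith) 2)
    nlinarith [Real.sq_sqrt (by linarith : (0:ℝ) ≤ 1 + 8 * α * σ ^ 2 / (h - ℓ) ^ 2),
      Real.sqrt_nonneg (1 + 8 * α * σ ^ 2 / (h - ℓ) ^ 2)]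
  -- generic continuity of the building block
  have hrpow : ∀ e : ℝ, ContinuousOn (fun β : ℝ => β ^ e) (Set.Ici 1) := by
    intro e
    exact ContinuousOn.rpow_const continuousOn_id
      (fun x hx => Or.inl (by simp only [Set.mem_Ici] at hx; positivity))
  -- positivity facts
  have hnum : ∀ (e : ℝ) (β : ℝ), 1 ≤ β → 0 < -ℓ - (ld - k * α) * β ^ e := by
    intro e β hβ
    have : (0:ℝ) < β ^ e := Real.rpow_pos_of_pos (by linarith) e
    nlinarith
  have hden : ∀ (e : ℝ) (β : ℝ), 1 ≤ β → 0 < h + (hd - k * α) * β ^ e := by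
    intro e β hβ
    have : (0:ℝ) < β ^ e := Real.rpow_pos_of_pos (by linarith) e
    nlinarith
  have hcont : ∀ (r e1 e2 : ℝ), ContinuousOn
      (fun β : ℝ => r * ((-ℓ - (ld - k * α) * β ^ e1) / (h + (hd - k * α) * β ^ e2)))
      (Set.Ici 1) := by
    intro r e1 e2
    apply ContinuousOn.mul continuousOn_const
    apply ContinuousOn.div
    · exact ContinuousOn.sub continuousOn_const (ContinuousOn.mul continuousOn_const (hrpow e1))
    · exact ContinuousOn.add continuousOn_const (ContinuousOn.mul continuousOn_const (hrpow e2))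
    · intro x hx
      exact ne_of_gt (hden e2 x hx)
  have hc1 : ContinuousOn Q₁ (Set.Ici 1) :=
    (hcont ((γ - 1) / (γ + 1)) (-((γ + 1) / 2)) ((1 - γ) / 2)).congr (fun x _ => hQ₁ x)
  have hc2 : ContinuousOn Q₂ (Set.Ici 1) :=
    (hcont ((γ + 1) / (γ - 1)) ((γ - 1) / 2) ((γ + 1) / 2)).congr (fun x _ => hQ₂ x)
  have hpos : ∀ β : ℝ, 1 ≤ β → 0 < Q₁ β := by
    intro β hβ
    rw [hQ₁ β]
    have := hnum (-((γ + 1) / 2)) β hβ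
    have := hden ((1 - γ) / 2) β hβ
    have hr : 0 < (γ - 1) / (γ + 1) := by
      apply div_pos <;> linarith
    positivity
  refine ⟨hc1, hc2, hpos, ?_⟩
  -- the crossing point
  set c₁ : ℝ := ((γ - 1) / (γ + 1)) * ((-ℓ) / (h + (hd - k * α))) with hc₁def
  have hc₁pos : 0 < c₁ := by
    apply mul_pos (div_pos (by linarith) (by linarith)) (div_pos (by linarith) (by linarith))
  set c₂ : ℝ := ((γ + 1) / (γ - 1)) * ((-ℓ + (k * α - ld)) / (hd - k * α)) with hc₂def
  have hc₂pos : 0 < c₂ := by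
    apply mul_pos (div_pos (by linarith) (by linarith)) (div_pos (by linarith) (by linarith))
  set B : ℝ := max 2 (c₂ / c₁ + 1) with hBdef
  have hB2 : (2:ℝ) ≤ B := le_max_left _ _
  have hB1 : (1:ℝ) ≤ B := by linarith
  have hBpos : (0:ℝ) < B := by linarith
  have hBgt : c₂ / c₁ < B := lt_of_lt_of_le (by linarith) (le_max_right _ _)
  -- Q₁ B ≥ c₁
  have hQ1B : c₁ ≤ Q₁ B := by
    rw [hQ₁ B]
    have hp : (0:ℝ) < B ^ (-((γ + 1) / 2)) := Real.rpow_pos_of_pos hBpos _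
    have hq : B ^ ((1 - γ) / 2) ≤ 1 :=
      Real.rpow_le_one_of_one_le_of_nonpos hB1 (by linarith)
    have hqpos : (0:ℝ) < B ^ ((1 - γ) / 2) := Real.rpow_pos_of_pos hBpos _
    have hfrac : (-ℓ) / (h + (hd - k * α)) ≤
        (-ℓ - (ld - k * α) * B ^ (-((γ + 1) / 2))) / (h + (hd - k * α) * B ^ ((1 - γ) / 2)) := by
      apply div_le_div₀ (by nlinarith) (by nlinarith) (by nlinarith) (by nlinarith)
    have hr : 0 ≤ (γ - 1) / (γ + 1) := by apply div_nonneg <;> linarith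
    rw [hc₁def]
    exact mul_le_mul_of_nonneg_left hfrac hr
  -- Q₂ B ≤ c₂ / B
  have hQ2B : Q₂ B ≤ c₂ / B := by
    rw [hQ₂ B]
    have hs : (1:ℝ) ≤ B ^ ((γ - 1) / 2) := Real.one_le_rpow hB1 (by linarith)
    have hspos : (0:ℝ) < B ^ ((γ - 1) / 2) := Real.rpow_pos_of_pos hBpos _
    have htpos : (0:ℝ) < B ^ ((γ + 1) / 2) := Real.rpow_pos_of_pos hBpos _
    have hratio : B ^ ((γ - 1) / 2) / B ^ ((γ + 1) / 2) = 1 / B := by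
      rw [← Real.rpow_sub hBpos]
      have : (γ - 1) / 2 - (γ + 1) / 2 = -1 := by ring
      rw [this, Real.rpow_neg_one]
      exact inv_eq_one_div B
    have hfrac : (-ℓ - (ld - k * α) * B ^ ((γ - 1) / 2)) / (h + (hd - k * α) * B ^ ((γ + 1) / 2))
        ≤ ((-ℓ + (k * α - ld)) * B ^ ((γ - 1) / 2)) / ((hd - k * α) * B ^ ((γ + 1) / 2)) := by
      refine div_le_div₀ (mul_nonneg (by linarith) hspos.le) ?_
        (mul_pos hb htpos) (by nlinarith)
      nlinarith [mul_nonneg (by linarith : (0:ℝ) ≤ -ℓ)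
        (by linarith : (0:ℝ) ≤ B ^ ((γ - 1) / 2) - 1)]
    have heq : ((-ℓ + (k * α - ld)) * B ^ ((γ - 1) / 2)) / ((hd - k * α) * B ^ ((γ + 1) / 2))
        = ((-ℓ + (k * α - ld)) / (hd - k * α)) * (1 / B) := by
      rw [mul_div_mul_comm, hratio]
    have hr : 0 ≤ (γ + 1) / (γ - 1) := by apply div_nonneg <;> linarith
    calc ((γ + 1) / (γ - 1)) *
        ((-ℓ - (ld - k * α) * B ^ ((γ - 1) / 2)) / (h + (hd - k * α) * B ^ ((γ + 1) / 2)))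
        ≤ ((γ + 1) / (γ - 1)) * (((-ℓ + (k * α - ld)) / (hd - k * α)) * (1 / B)) := by
          rw [← heq]; exact mul_le_mul_of_nonneg_left hfrac hr
      _ = c₂ / B := by rw [hc₂def]; ring
  have hc₂B : c₂ / B < c₁ := by
    rw [div_lt_iff₀ hBpos]
    calc c₂ = c₁ * (c₂ / c₁) := by field_simp
      _ < c₁ * B := by exact mul_lt_mul_of_pos_left hBgt hc₁pos
  -- Q₂ 1 > Q₁ 1
  have hQ11 : Q₁ 1 < Q₂ 1 := by
    rw [hQ₁ 1, hQ₂ 1]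
    simp only [Real.one_rpow, mul_one]
    have hC : 0 < (-ℓ - (ld - k * α)) / (h + (hd - k * α)) :=
      div_pos (by linarith) (by linarith)
    have : (γ - 1) / (γ + 1) < (γ + 1) / (γ - 1) := by
      rw [div_lt_div_iff₀ (by linarith) (by linarith)]
      nlinarith
    exact mul_lt_mul_of_pos_right this hC
  -- IVT on F = Q₂ - Q₁
  have hFcont : ContinuousOn (fun x => Q₂ x - Q₁ x) (Set.Icc 1 B) :=
    (hc2.mono (Set.Icc_subset_Ici_self)).sub (hc1.mono (Set.Icc_subset_Ici_self))
  have hFB : Q₂ B - Q₁ B < 0 := by linarith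
  have hF1 : 0 < Q₂ 1 - Q₁ 1 := by linarith
  have hmem : (0:ℝ) ∈ Set.Icc (Q₂ B - Q₁ B) (Q₂ 1 - Q₁ 1) := ⟨le_of_lt hFB, le_of_lt hF1⟩
  obtain ⟨β, hβmem, hβeq⟩ := intermediate_value_Icc' hB1 hFcont hmem
  have hβeq' : Q₂ β - Q₁ β = 0 := hβeq
  refine ⟨β, ?_, by linarith⟩
  rcases lt_or_eq_of_le hβmem.1 with h' | h'
  · exact h'
  · exfalso; rw [← h'] at hβeq'; linarith
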